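/- arXiv:1606.03790 — 2 statements merged into one kernel-verified Lean document; each statement's English description precedes it below -/
import Mathlib

section
/- For every integer n ≥ 2, the arrangement graph A_{n,n−1} is isomorphic to the n-dimensional star graph S_n. -/
/-- A vertex of the arrangement graph `A_{n,k}`: a `k`-tuple of pairwise
distinct elements of `⟨n⟩ = {1, …, n}` (modelled as `Fin n`). -/
def AVertex (n k : ℕ) : Type := {f : Fin k → Fin n // Function.Injective f}

/-- The arrangement graph `A_{n,k}`: two tuples are adjacent iff they differ
in exactly one position. -/
def ArrangementGraph (n k : ℕ) : SimpleGraph (AVertex n k) where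
  Adj u v := ∃! i : Fin k, u.1 i ≠ v.1 i
  symm := by
    constructor
    rintro u v ⟨i, hi, huniq⟩
    exact ⟨i, Ne.symm hi, fun j hj => huniq j (Ne.symm hj)⟩
  loopless := by
    constructor
    rintro u ⟨i, hi, -⟩
    exact hi rfl

/-- The `n`-dimensional star graph `S_n`: vertices are the permutations of
`⟨n⟩` (a permutation `u` is read as the tuple `u 0, u 1, …`), and two
permutations are adjacent iff one is obtained from the other by transposing
the first symbol with the symbol in some other position. -/
def StarGraph (n : ℕ) : SimpleGraph (Equiv.Perm (Fin n)) where
  Adj u v := u ≠ v ∧ ∃ (h : 0 < n) (i : Fin n), v = (Equiv.swap ⟨0, h⟩ i).trans u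
  symm := by
    constructor
    rintro u v ⟨hne, h, i, rfl⟩
    refine ⟨hne.symm, h, i, ?_⟩
    ext x
    simp [Equiv.swap_apply_self]
  loopless := by
    constructor
    rintro u ⟨hne, -⟩
    exact hne rfl

theorem arrangement_iso_star (n : ℕ) (hn : 2 ≤ n) :
    Nonempty (ArrangementGraph n (n - 1) ≃g StarGraph n) := by
  have hpos : 0 < n := by omega
  set z : Fin n := ⟨0, hpos⟩ with hz
  set e : Fin (n - 1) → Fin n := fun j => ⟨j.1 + 1, by omega⟩ with he
  have einj : Function.Injective e := by
    intro a b h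
    have : a.1 + 1 = b.1 + 1 := congrArg Fin.val h
    exact Fin.ext (by omega)
  have ene : ∀ j, e j ≠ z := by
    intro j h
    have : j.1 + 1 = 0 := congrArg Fin.val h
    omega
  have hcover : ∀ x : Fin n, x ≠ z → ∃ j, x = e j := by
    intro x hx
    have hx0 : x.1 ≠ 0 := fun h => hx (Fin.ext h)
    exact ⟨⟨x.1 - 1, by omega⟩, Fin.ext (by simp [e]; omega)⟩
  let φ : Equiv.Perm (Fin n) → AVertex n (n - 1) :=
    fun u => ⟨fun j => u (e j), u.injective.comp einj⟩
  -- injectivity of φ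
  have hinj : Function.Injective φ := by
    intro u v h
    have hev : ∀ j, u (e j) = v (e j) := fun j => congrFun (congrArg Subtype.val h) j
    have h0 : u z = v z := by
      by_contra h0
      obtain ⟨x, hx⟩ := v.surjective (u z)
      rcases eq_or_ne x z with rfl | hxz
      · exact h0 hx.symm
      · obtain ⟨j, rfl⟩ := hcover x hxz
        have : u (e j) = u z := by rw [hev j, hx]
        exact ene j (u.injective this)
    refine Equiv.ext fun x => ?_
    rcases eq_or_ne x z with rfl | hxz
    · exact h0
    · obtain ⟨j, rfl⟩ := hcover x hxz
      exact hev j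
  -- cardinalities
  letI : Fintype (AVertex n (n - 1)) := Subtype.fintype _
  have hcard : Fintype.card (Equiv.Perm (Fin n)) = Fintype.card (AVertex n (n - 1)) := by
    have h1 : AVertex n (n - 1) ≃ (Fin (n - 1) ↪ Fin n) :=
      { toFun := fun f => ⟨f.1, f.2⟩
        invFun := fun f => ⟨f.1, f.2⟩
        left_inv := fun f => rfl
        right_inv := fun f => rfl }
    rw [Fintype.card_congr h1, Fintype.card_embedding_eq, Fintype.card_perm,
      Fintype.card_fin, Fintype.card_fin]
    have hdf : n.descFactorial ((n - 1) + 1) = (n - (n - 1)) * n.descFactorial (n - 1) :=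
      Nat.descFactorial_succ n (n - 1)
    have h2 : (n - 1) + 1 = n := by omega
    have h3 : n - (n - 1) = 1 := by omega
    rw [h2, h3, Nat.descFactorial_self, one_mul] at hdf
    omega
  have hbij : Function.Bijective φ :=
    (Fintype.bijective_iff_injective_and_card φ).2 ⟨hinj, hcard⟩
  let ψ : Equiv.Perm (Fin n) ≃ AVertex n (n - 1) := Equiv.ofBijective φ hbij
  -- the key adjacency lemma
  have key : ∀ u v : Equiv.Perm (Fin n),
      (ArrangementGraph n (n - 1)).Adj (φ u) (φ v) ↔ (StarGraph n).Adj u v := by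
    intro u v
    constructor
    · rintro ⟨i, hi, huniq⟩
      have hi' : u (e i) ≠ v (e i) := hi
      have hagree : ∀ j, j ≠ i → u (e j) = v (e j) := by
        intro j hj
        by_contra h
        exact hj (huniq j h)
      -- v (e i) = u z
      have h1 : v (e i) = u z := by
        obtain ⟨x, hx⟩ := v.surjective (u z)
        rcases eq_or_ne x z with rfl | hxz
        · exfalso
          obtain ⟨y, hy⟩ := v.surjective (u (e i))
          rcases eq_or_ne y z with rfl | hyz
          · have : u z = u (e i) := by rw [← hx, hy]
            exact ene i (u.injective this).symm
          · obtain ⟨j, rfl⟩ := hcover y hyz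
            rcases eq_or_ne j i with rfl | hji
            · exact hi' hy.symm
            · exact hji (einj (u.injective ((hagree j hji).trans hy)))
        · obtain ⟨j, rfl⟩ := hcover x hxz
          rcases eq_or_ne j i with rfl | hji
          · exact hx
          · exact absurd (u.injective ((hagree j hji).trans hx)) (ene j)
      -- v z = u (e i)
      have h2 : v z = u (e i) := by
        obtain ⟨y, hy⟩ := v.surjective (u (e i))
        rcases eq_or_ne y z with rfl | hyz
        · exact hy
        · obtain ⟨j, rfl⟩ := hcover y hyz
          rcases eq_or_ne j i with rfl | hji
          · exact absurd (u.injective (h1.symm.trans hy)).symm (ene j)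
          · exact absurd (einj (u.injective ((hagree j hji).trans hy))) hji
      refine ⟨fun huv => hi' (by rw [huv]), hpos, e i, ?_⟩
      refine Equiv.ext fun x => ?_
      simp only [Equiv.trans_apply]
      rcases eq_or_ne x z with rfl | hxz
      · rw [Equiv.swap_apply_left]
        exact h2
      · obtain ⟨j, rfl⟩ := hcover x hxz
        rcases eq_or_ne j i with rfl | hji
        · rw [Equiv.swap_apply_right]
          exact h1
        · rw [Equiv.swap_apply_of_ne_of_ne (ene j) (fun hh => hji (einj hh))]
          exact (hagree j hji).symm
    · rintro ⟨hne, h, i, rfl⟩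
      have hiz : i ≠ z := by
        rintro rfl
        apply hne
        refine Equiv.ext fun x => ?_
        simp [Equiv.swap_self]
        show x = Equiv.swap z z x
        simp
      obtain ⟨j, rfl⟩ := hcover i hiz
      refine ⟨j, ?_, ?_⟩
      · show u (e j) ≠ u (Equiv.swap ⟨0, h⟩ (e j) (e j))
        rw [Equiv.swap_apply_right]
        exact fun hh => ene j (u.injective hh)
      · intro j' hj'
        by_contra hjj
        apply hj'
        show u (e j') = u (Equiv.swap ⟨0, h⟩ (e j) (e j'))
        rw [Equiv.swap_apply_of_ne_of_ne (ene j') (fun hh => hjj (einj hh))]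
  -- assemble the isomorphism
  refine ⟨⟨ψ.symm, ?_⟩⟩
  intro a b
  conv_rhs => rw [← ψ.apply_symm_apply a, ← ψ.apply_symm_apply b]
  exact (key _ _).symm
end

section
/- For all integers n and k with 1 ≤ k < n, the arrangement graph A_{n,k} is vertex-transitive and edge-transitive: for any two vertices u, v there is a graph automorphism of A_{n,k} mapping u to v, and for any two edges e, f there is a graph automorphism mapping e to f. -/
/-- Any two injections between finite types of suitable size are conjugate by a
permutation of the codomain. -/
lemma exists_perm_comp {α β : Type*} [Fintype α] [Fintype β] {f g : α → β}
    (hf : Function.Injective f) (hg : Function.Injective g) :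
    ∃ σ : Equiv.Perm β, ∀ a, σ (f a) = g a := by
  classical
  have hcard : Fintype.card ((Set.range f)ᶜ : Set β) =
      Fintype.card ((Set.range g)ᶜ : Set β) := by
    rw [Fintype.card_compl_set, Fintype.card_compl_set,
      Set.card_range_of_injective hf, Set.card_range_of_injective hg]
  let ef := Equiv.ofInjective f hf
  let eg := Equiv.ofInjective g hg
  let c := Fintype.equivOfCardEq hcard
  refine ⟨(Equiv.Set.sumCompl (Set.range f)).symm.trans
    (((ef.symm.trans eg).sumCongr c).trans (Equiv.Set.sumCompl (Set.range g))), fun a => ?_⟩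
  simp only [Equiv.trans_apply]
  rw [Equiv.Set.sumCompl_symm_apply_of_mem (Set.mem_range_self a)]
  simp [ef, eg, Equiv.ofInjective_symm_apply]

/-- The automorphism of the arrangement graph given by post-composition with a
permutation of `Fin n`. -/
def leftAut {n k : ℕ} (σ : Equiv.Perm (Fin n)) :
    ArrangementGraph n k ≃g ArrangementGraph n k where
  toEquiv :=
    { toFun := fun u => ⟨σ ∘ u.1, σ.injective.comp u.2⟩
      invFun := fun u => ⟨σ.symm ∘ u.1, σ.symm.injective.comp u.2⟩
      left_inv := fun u => Subtype.ext <| funext fun i => σ.symm_apply_apply _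
      right_inv := fun u => Subtype.ext <| funext fun i => σ.apply_symm_apply _ }
  map_rel_iff' := by
    intro u v
    show (∃! i, σ (u.1 i) ≠ σ (v.1 i)) ↔ (∃! i, u.1 i ≠ v.1 i)
    exact existsUnique_congr fun i => σ.injective.ne_iff

/-- The automorphism of the arrangement graph given by pre-composition with a
permutation of `Fin k`. -/
def rightAut {n k : ℕ} (τ : Equiv.Perm (Fin k)) :
    ArrangementGraph n k ≃g ArrangementGraph n k where
  toEquiv :=
    { toFun := fun u => ⟨u.1 ∘ τ, u.2.comp τ.injective⟩
      invFun := fun u => ⟨u.1 ∘ τ.symm, u.2.comp τ.symm.injective⟩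
      left_inv := fun u => Subtype.ext <| funext fun i => by simp
      right_inv := fun u => Subtype.ext <| funext fun i => by simp }
  map_rel_iff' := by
    intro u v
    show (∃! i, u.1 (τ i) ≠ v.1 (τ i)) ↔ (∃! i, u.1 i ≠ v.1 i)
    constructor
    · rintro ⟨i, hi, hu⟩
      refine ⟨τ i, hi, fun j hj => ?_⟩
      have := hu (τ.symm j) (by simpa using hj)
      rw [← this]; simp
    · rintro ⟨i, hi, hu⟩
      refine ⟨τ.symm i, by simpa using hi, fun j hj => ?_⟩
      have := hu (τ j) hj
      apply τ.injective
      rw [this]; simp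

theorem arrangement_vertex_and_edge_transitive (n k : ℕ)
    (hk : 1 ≤ k) (hkn : k < n) :
    (∀ u v : AVertex n k,
      ∃ φ : ArrangementGraph n k ≃g ArrangementGraph n k, φ u = v) ∧
    (∀ e ∈ (ArrangementGraph n k).edgeSet, ∀ f ∈ (ArrangementGraph n k).edgeSet,
      ∃ φ : ArrangementGraph n k ≃g ArrangementGraph n k, e.map ⇑φ = f) := by
  constructor
  · intro u v
    obtain ⟨σ, hσ⟩ := exists_perm_comp u.2 v.2
    exact ⟨leftAut σ, Subtype.ext (funext hσ)⟩
  · -- edge transitivity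
    -- key: for any adjacent pairs (u,v) and (x,y) there is φ with φ u = x, φ v = y
    have key : ∀ u v x y : AVertex n k, (ArrangementGraph n k).Adj u v →
        (ArrangementGraph n k).Adj x y →
        ∃ φ : ArrangementGraph n k ≃g ArrangementGraph n k, φ u = x ∧ φ v = y := by
      intro u v x y huv hxy
      obtain ⟨i, hi, hiu⟩ := huv
      obtain ⟨j, hj, hju⟩ := hxy
      -- move the differing position of (u,v) from i to j
      let τ := Equiv.swap i j
      set u' : AVertex n k := rightAut (n := n) τ u with hu'
      set v' : AVertex n k := rightAut (n := n) τ v with hv'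
      have hu'1 : ∀ m, u'.1 m = u.1 (τ m) := fun m => rfl
      have hv'1 : ∀ m, v'.1 m = v.1 (τ m) := fun m => rfl
      have hτj : τ j = i := Equiv.swap_apply_right i j
      have hdiff : u'.1 j ≠ v'.1 j := by rw [hu'1, hv'1, hτj]; exact hi
      have hsame : ∀ m, m ≠ j → u'.1 m = v'.1 m := by
        intro m hm
        rw [hu'1, hv'1]
        by_contra hne
        have : τ m = i := hiu _ hne
        exact hm (by simpa [hτj] using congrArg τ.symm (this.trans hτj.symm) |>.trans (by simp))
      have hxsame : ∀ m, m ≠ j → x.1 m = y.1 m := by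
        intro m hm
        by_contra hne
        exact hm (hju _ hne)
      -- extend to Option (Fin k)
      let F : Option (Fin k) → Fin n := fun o => o.elim (v'.1 j) u'.1
      let G : Option (Fin k) → Fin n := fun o => o.elim (y.1 j) x.1
      have hvnotin : ∀ m, u'.1 m ≠ v'.1 j := by
        intro m
        rcases eq_or_ne m j with rfl | hm
        · exact hdiff
        · rw [hsame m hm]; exact fun h => hm (v'.2 h)
      have hynotin : ∀ m, x.1 m ≠ y.1 j := by
        intro m
        rcases eq_or_ne m j with rfl | hm
        · exact hj
        · rw [hxsame m hm]; exact fun h => hm (y.2 h)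
      have hF : Function.Injective F := by
        rintro (_ | a) (_ | b) h
        · rfl
        · exact absurd h.symm (hvnotin b)
        · exact absurd h (hvnotin a)
        · exact congrArg some (u'.2 h)
      have hG : Function.Injective G := by
        rintro (_ | a) (_ | b) h
        · rfl
        · exact absurd h.symm (hynotin b)
        · exact absurd h (hynotin a)
        · exact congrArg some (x.2 h)
      obtain ⟨σ, hσ⟩ := exists_perm_comp hF hG
      refine ⟨(rightAut τ).trans (leftAut σ), ?_, ?_⟩
      · apply Subtype.ext; funext m
        exact hσ (some m)
      · apply Subtype.ext; funext m
        show σ (v'.1 m) = y.1 m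
        rcases eq_or_ne m j with rfl | hm
        · exact hσ none
        · rw [← hsame m hm, ← hxsame m hm]
          exact hσ (some m)
    intro e he f hf
    induction e using Sym2.ind with
    | _ u v =>
      induction f using Sym2.ind with
      | _ x y =>
        rw [SimpleGraph.mem_edgeSet] at he hf
        obtain ⟨φ, h1, h2⟩ := key u v x y he hf
        exact ⟨φ, by rw [Sym2.map_pair_eq, h1, h2]⟩
end
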